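/- Assume F is continuous with F(0) = 0, F(s) ≥ 0 for all s ≥ 0 (H2), and α₀ := inf_{s>0} F(s)/(s²/2) < 1 (H1). Then for every M > 0 there exist a nonzero, nonnegative, Lipschitz, compactly supported function u : ℝᴺ → ℝ and ω > 0 such that E(u,ω) < |C(u,ω)| (i.e. the energy-to-charge ratio Λ(u,ω) := E(u,ω)/|C(u,ω)| is < 1) and |C(u,ω)| ≥ M. -/

import Mathlib

open MeasureTheory
open Metric Set Filter Topology

noncomputable section

lemma clamp_lip' (a b : ℝ) : |min 1 (max 0 a) - min 1 (max 0 b)| ≤ |a - b| := by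
  have h1 : |min 1 (max 0 a) - min 1 (max 0 b)| ≤ max |(1:ℝ) - 1| |max 0 a - max 0 b| :=
    abs_min_sub_min_le_max 1 (max 0 a) 1 (max 0 b)
  have h2 : |max 0 a - max 0 b| ≤ |a - b| := by
    rw [max_comm (0:ℝ) a, max_comm (0:ℝ) b]; exact abs_max_sub_max_le_abs a b 0
  have h3 : max |(1:ℝ) - 1| |max 0 a - max 0 b| = |max 0 a - max 0 b| := by simp
  linarith [h3 ▸ h1]


set_option maxHeartbeats 1000000 in
/-- Under (H1) and (H2), for every `M > 0` there is a
nonzero, nonnegative, Lipschitz, compactly supported `u` and `ω > 0` with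
energy-to-charge ratio `Λ(u,ω) = E(u,ω)/|C(u,ω)| < 1` and `|C(u,ω)| ≥ M`. -/
theorem exists_ratio_lt_one_large_charge (N : ℕ) (hN : 2 ≤ N)
    (F : ℝ → ℝ) (hF : Continuous F) (hF0 : F 0 = 0)
    (h2 : ∀ s : ℝ, 0 ≤ s → 0 ≤ F s)
    (h1 : sInf {r : ℝ | ∃ s : ℝ, 0 < s ∧ r = F s / (s ^ 2 / 2)} < 1) :
    ∀ M : ℝ, 0 < M →
      ∃ (u : EuclideanSpace ℝ (Fin N) → ℝ) (ω : ℝ),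
        u ≠ (fun _ => (0:ℝ)) ∧ (∀ x, 0 ≤ u x) ∧
        (∃ K : NNReal, LipschitzWith K u) ∧ HasCompactSupport u ∧
        0 < ω ∧
        (∫ x, ((1:ℝ)/2 * ‖gradient u x‖ ^ 2 + (1:ℝ)/2 * ω ^ 2 * (u x) ^ 2 + F (u x))) <
          |(-ω * ∫ x, (u x) ^ 2)| ∧
        M ≤ |(-ω * ∫ x, (u x) ^ 2)| := by
  intro M hM
  set X := EuclideanSpace ℝ (Fin N)
  -- Step 1: pick s₀ with F s₀ < s₀²/2
  obtain ⟨s₀, hs₀, hFs₀⟩ : ∃ s₀ : ℝ, 0 < s₀ ∧ F s₀ < s₀ ^ 2 / 2 := by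
    have hne : {r : ℝ | ∃ s : ℝ, 0 < s ∧ r = F s / (s ^ 2 / 2)}.Nonempty :=
      ⟨F 1 / (1 ^ 2 / 2), 1, one_pos, rfl⟩
    have hbdd : BddBelow {r : ℝ | ∃ s : ℝ, 0 < s ∧ r = F s / (s ^ 2 / 2)} := by
      refine ⟨0, fun r hr => ?_⟩
      obtain ⟨s, hs, rfl⟩ := hr
      exact div_nonneg (h2 s hs.le) (by positivity)
    obtain ⟨r, ⟨s₀, hs₀, rfl⟩, hlt⟩ := (csInf_lt_iff hbdd hne).1 h1
    exact ⟨s₀, hs₀, (div_lt_one (by positivity)).1 hlt⟩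
  set δ : ℝ := s₀ ^ 2 / 2 - F s₀ with hδdef
  have hδ : 0 < δ := by simp only [hδdef]; linarith
  -- Step 2: bound for F on [0, s₀]
  obtain ⟨B₀, hB₀⟩ : ∃ B₀ : ℝ, ∀ t ∈ Icc (0:ℝ) s₀, F t ≤ B₀ := by
    obtain ⟨B₀, hB₀⟩ := (isCompact_Icc (a := (0:ℝ)) (b := s₀)).bddAbove_image
      hF.continuousOn
    exact ⟨B₀, fun t ht => hB₀ ⟨t, ht, rfl⟩⟩
  set B : ℝ := s₀ ^ 2 / 2 + max B₀ 0 with hBdef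
  have hB : 0 < B := by
    have : (0:ℝ) ≤ max B₀ 0 := le_max_right _ _
    have : (0:ℝ) < s₀ ^ 2 / 2 := by positivity
    simp only [hBdef]; linarith [le_max_right B₀ 0]
  -- unit ball volume
  set c : ℝ := (volume (ball (0 : X) 1)).toReal with hcdef
  have hc : 0 < c := by
    rw [hcdef]
    exact ENNReal.toReal_pos (measure_ball_pos volume _ one_pos).ne' measure_ball_lt_top.ne
  -- Step 3: choose R
  obtain ⟨R, hR, hkey, hMR⟩ : ∃ R : ℝ, 0 < R ∧
      B * ((R + 1) ^ N - R ^ N) < δ * R ^ N ∧ M ≤ s₀ ^ 2 * c * R ^ N := by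
    have hNne : N ≠ 0 := by omega
    have t1 : Tendsto (fun R : ℝ => R ^ N) atTop atTop := tendsto_pow_atTop hNne
    have t2 : Tendsto (fun R : ℝ => (δ + B) - B * (1 + 1 / R) ^ N) atTop (𝓝 δ) := by
      have hp : Tendsto (fun R : ℝ => (1 + 1 / R) ^ N) atTop (𝓝 1) := by
        have h0 : Tendsto (fun R : ℝ => 1 + 1 / R) atTop (𝓝 (1 + 0)) :=
          tendsto_const_nhds.add ((tendsto_inv_atTop_zero (𝕜 := ℝ)).congr
            fun x => (one_div x).symm)
        simpa using h0.pow N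
      have : Tendsto (fun R : ℝ => (δ + B) - B * (1 + 1 / R) ^ N) atTop
          (𝓝 ((δ + B) - B * 1)) := tendsto_const_nhds.sub (hp.const_mul B)
      simpa using this
    have t3 : Tendsto (fun R : ℝ => R ^ N * ((δ + B) - B * (1 + 1 / R) ^ N)) atTop atTop :=
      t1.atTop_mul_pos hδ t2
    have t4 : Tendsto (fun R : ℝ => s₀ ^ 2 * c * R ^ N) atTop atTop :=
      t1.const_mul_atTop (by positivity)
    have hev : ∀ᶠ R : ℝ in atTop,
        0 < R ^ N * ((δ + B) - B * (1 + 1 / R) ^ N) ∧ M ≤ s₀ ^ 2 * c * R ^ N ∧ 0 < R := by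
      filter_upwards [t3.eventually_gt_atTop 0, t4.eventually_ge_atTop M,
        eventually_gt_atTop 0] with R ha hb hc'
      exact ⟨ha, hb, hc'⟩
    obtain ⟨R, ha, hb, hc'⟩ := hev.exists
    refine ⟨R, hc', ?_, hb⟩
    have hexp : (R + 1) ^ N = R ^ N * (1 + 1 / R) ^ N := by
      rw [← mul_pow]; congr 1; field_simp
    rw [hexp]; nlinarith [ha]
  -- Step 4: define u
  set u : X → ℝ := fun x => s₀ * min 1 (max 0 (R + 1 - ‖x‖)) with hu
  have hnn : ∀ x, 0 ≤ u x := fun x =>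
    mul_nonneg hs₀.le (le_min zero_le_one (le_max_left _ _))
  have hle : ∀ x, u x ≤ s₀ := fun x => by
    have h : min 1 (max 0 (R + 1 - ‖x‖)) ≤ 1 := min_le_left _ _
    calc u x = s₀ * min 1 (max 0 (R + 1 - ‖x‖)) := rfl
    _ ≤ s₀ * 1 := by nlinarith
    _ = s₀ := mul_one _
  have hball : ∀ x : X, ‖x‖ < R → u x = s₀ := by
    intro x hx
    have h1 : (1:ℝ) ≤ R + 1 - ‖x‖ := by linarith
    have h0 : max 0 (R + 1 - ‖x‖) = R + 1 - ‖x‖ := max_eq_right (by linarith)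
    show s₀ * _ = s₀
    rw [h0, min_eq_left h1, mul_one]
  have hout : ∀ x : X, R + 1 ≤ ‖x‖ → u x = 0 := by
    intro x hx
    have h0 : max 0 (R + 1 - ‖x‖) = 0 := max_eq_left (by linarith)
    show s₀ * _ = 0
    rw [h0, min_eq_right zero_le_one, mul_zero]
  have hlip : LipschitzWith (Real.toNNReal s₀) u := by
    apply LipschitzWith.of_dist_le_mul
    intro x y
    rw [Real.dist_eq, Real.coe_toNNReal _ hs₀.le]
    calc |u x - u y| = s₀ * |min 1 (max 0 (R + 1 - ‖x‖)) - min 1 (max 0 (R + 1 - ‖y‖))| := by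
          rw [show u x - u y = s₀ * (min 1 (max 0 (R + 1 - ‖x‖)) - min 1 (max 0 (R + 1 - ‖y‖)))
            from by show s₀ * _ - s₀ * _ = _; ring, abs_mul, abs_of_nonneg hs₀.le]
    _ ≤ s₀ * |(R + 1 - ‖x‖) - (R + 1 - ‖y‖)| :=
          mul_le_mul_of_nonneg_left (clamp_lip' _ _) hs₀.le
    _ = s₀ * |‖x‖ - ‖y‖| := by
          rw [show (R + 1 - ‖x‖) - (R + 1 - ‖y‖) = -(‖x‖ - ‖y‖) by ring, abs_neg]
    _ ≤ s₀ * dist x y := by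
          have hd := abs_norm_sub_norm_le x y
          rw [← dist_eq_norm] at hd
          nlinarith
  have hcont : Continuous u := hlip.continuous
  have hsupp : HasCompactSupport u := by
    apply HasCompactSupport.intro (isCompact_closedBall (0 : X) (R + 1))
    intro x hx
    simp only [mem_closedBall, dist_zero_right, not_le] at hx
    exact hout x hx.le
  -- gradient facts
  have hgradnorm : ∀ x : X, ‖gradient u x‖ = ‖fderiv ℝ u x‖ := fun x => by
    rw [gradient, LinearIsometryEquiv.norm_map]
  have hgradle : ∀ x : X, ‖gradient u x‖ ≤ s₀ := fun x => by
    rw [hgradnorm]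
    calc ‖fderiv ℝ u x‖ ≤ (Real.toNNReal s₀ : ℝ) := norm_fderiv_le_of_lipschitz ℝ hlip
    _ = s₀ := Real.coe_toNNReal _ hs₀.le
  have hgrad0in : ∀ x : X, ‖x‖ < R → gradient u x = 0 := by
    intro x hx
    have hev : u =ᶠ[𝓝 x] fun _ => s₀ := by
      have hmem : ball (0 : X) R ∈ 𝓝 x :=
        isOpen_ball.mem_nhds (by simpa [mem_ball, dist_zero_right] using hx)
      filter_upwards [hmem] with y hy
      exact hball y (by simpa [mem_ball, dist_zero_right] using hy)
    rw [gradient, hev.fderiv_eq, fderiv_const_apply]; simp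
  have hgrad0out : ∀ x : X, R + 1 < ‖x‖ → gradient u x = 0 := by
    intro x hx
    have hev : u =ᶠ[𝓝 x] fun _ => (0:ℝ) := by
      have hopen : IsOpen {y : X | R + 1 < ‖y‖} := by
        have : {y : X | R + 1 < ‖y‖} = (closedBall (0 : X) (R+1))ᶜ := by
          ext y; simp [mem_closedBall, dist_zero_right, not_le]
        rw [this]; exact isClosed_closedBall.isOpen_compl
      filter_upwards [hopen.mem_nhds hx] with y hy
      exact hout y (le_of_lt hy)
    rw [gradient, hev.fderiv_eq, fderiv_const_apply]; simp
  -- measurability of gradient norm squared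
  have hmeas : Measurable (fun x : X => (1:ℝ)/2 * ‖gradient u x‖ ^ 2) := by
    have h0 : Measurable (fderiv ℝ u) := measurable_fderiv ℝ u
    have h1 : Measurable (fun x : X => gradient u x) :=
      (LinearIsometryEquiv.continuous _).measurable.comp h0
    exact (h1.norm.pow_const 2).const_mul _
  -- integrabilities
  have i_grad : Integrable (fun x : X => (1:ℝ)/2 * ‖gradient u x‖ ^ 2) := by
    have hdom : Integrable ((closedBall (0:X) (R+1)).indicator (fun _ => s₀ ^ 2)) := by
      rw [integrable_indicator_iff measurableSet_closedBall]
      exact integrableOn_const measure_closedBall_lt_top.ne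
    refine hdom.mono' hmeas.aestronglyMeasurable ?_
    refine Eventually.of_forall fun x => ?_
    by_cases hx : x ∈ closedBall (0:X) (R+1)
    · rw [indicator_of_mem hx]
      have := hgradle x
      have hgn : 0 ≤ ‖gradient u x‖ := norm_nonneg _
      rw [Real.norm_eq_abs, abs_of_nonneg (by positivity)]
      nlinarith
    · rw [indicator_of_notMem hx]
      have hxn : R + 1 < ‖x‖ := by
        simpa [mem_closedBall, dist_zero_right, not_le] using hx
      rw [hgrad0out x hxn]
      simp
  have i_u2 : Integrable (fun x : X => (u x) ^ 2) := by
    have : HasCompactSupport (fun x : X => (u x) ^ 2) :=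
      hsupp.comp_left (g := fun t : ℝ => t ^ 2) (by simp)
    exact (hcont.pow 2).integrable_of_hasCompactSupport this
  have i_Fu : Integrable (fun x : X => F (u x)) := by
    have : HasCompactSupport (fun x : X => F (u x)) := hsupp.comp_left (g := F) hF0
    exact (hF.comp hcont).integrable_of_hasCompactSupport this
  have i_u2half : Integrable (fun x : X => (1:ℝ)/2 * (u x) ^ 2) := i_u2.const_mul _
  -- the function g and the dominating function h
  set g : X → ℝ := fun x => (1:ℝ)/2 * ‖gradient u x‖ ^ 2 - (1:ℝ)/2 * (u x) ^ 2 + F (u x)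
    with hgdef
  have i_g : Integrable g := (i_grad.sub i_u2half).add i_Fu
  set A : Set X := closedBall (0:X) (R+1) \ ball (0:X) R with hAdef
  have hAmeas : MeasurableSet A := measurableSet_closedBall.diff measurableSet_ball
  set h : X → ℝ := fun x =>
    (ball (0:X) R).indicator (fun _ => F s₀ - s₀ ^ 2 / 2) x + A.indicator (fun _ => B) x
    with hhdef
  have i_h : Integrable h := by
    apply Integrable.add
    · rw [integrable_indicator_iff measurableSet_ball]
      exact integrableOn_const measure_ball_lt_top.ne
    · rw [integrable_indicator_iff hAmeas]
      refine integrableOn_const (ne_of_lt ?_)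
      exact lt_of_le_of_lt (measure_mono diff_subset) measure_closedBall_lt_top
  -- pointwise bound g ≤ h
  have hpt : ∀ x : X, g x ≤ h x := by
    intro x
    rcases lt_or_ge ‖x‖ R with hx | hx
    · have hxb : x ∈ ball (0:X) R := by simpa [mem_ball, dist_zero_right] using hx
      have hxA : x ∉ A := fun hA => hA.2 hxb
      rw [hhdef]
      simp only [indicator_of_mem hxb, indicator_of_notMem hxA, add_zero]
      rw [hgdef]
      simp only [hgrad0in x hx, hball x hx, norm_zero]
      ring_nf
      exact le_refl _
    · rcases le_or_gt ‖x‖ (R+1) with hx2 | hx2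
      · have hxb : x ∉ ball (0:X) R := by simp [mem_ball, dist_zero_right, not_lt, hx]
        have hxA : x ∈ A := ⟨by simpa [mem_closedBall, dist_zero_right] using hx2, hxb⟩
        rw [hhdef]
        simp only [indicator_of_notMem hxb, indicator_of_mem hxA, zero_add]
        have hg1 : (1:ℝ)/2 * ‖gradient u x‖ ^ 2 ≤ s₀ ^ 2 / 2 := by
          have := hgradle x
          have : ‖gradient u x‖ ^ 2 ≤ s₀ ^ 2 := by nlinarith [norm_nonneg (gradient u x)]
          linarith
        have hg2 : F (u x) ≤ max B₀ 0 :=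
          le_trans (hB₀ (u x) ⟨hnn x, hle x⟩) (le_max_left _ _)
        have hg3 : 0 ≤ (1:ℝ)/2 * (u x) ^ 2 := by positivity
        rw [hgdef, hBdef]
        dsimp only
        linarith
      · have hxb : x ∉ ball (0:X) R := by
          simp only [mem_ball, dist_zero_right, not_lt]; linarith
        have hxA : x ∉ A := fun hA => by
          have := hA.1
          simp only [mem_closedBall, dist_zero_right] at this
          linarith
        rw [hhdef]
        simp only [indicator_of_notMem hxb, indicator_of_notMem hxA, add_zero]
        rw [hgdef]
        simp only [hgrad0out x hx2, hout x hx2.le, norm_zero, hF0]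
        norm_num
  -- volume computations
  have hvol_ball : (volume (ball (0:X) R)).toReal = R ^ N * c := by
    rw [Measure.addHaar_ball_of_pos _ _ hR, finrank_euclideanSpace_fin, ENNReal.toReal_mul,
      ENNReal.toReal_ofReal (by positivity)]
  have hvol_cball : (volume (closedBall (0:X) (R+1))).toReal = (R+1) ^ N * c := by
    rw [Measure.addHaar_closedBall _ _ (by linarith : (0:ℝ) ≤ R + 1),
      finrank_euclideanSpace_fin, ENNReal.toReal_mul, ENNReal.toReal_ofReal (by positivity)]
  have hsubBC : ball (0:X) R ⊆ closedBall (0:X) (R+1) :=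
    ball_subset_closedBall.trans (closedBall_subset_closedBall (by linarith))
  have hvol_A : (volume A).toReal = (R+1) ^ N * c - R ^ N * c := by
    rw [hAdef, measure_diff hsubBC measurableSet_ball.nullMeasurableSet
      measure_ball_lt_top.ne,
      ENNReal.toReal_sub_of_le (measure_mono hsubBC) measure_closedBall_lt_top.ne,
      hvol_ball, hvol_cball]
  -- integral of h
  have hinth : ∫ x, h x = (F s₀ - s₀ ^ 2 / 2) * (R ^ N * c) + B * ((R+1) ^ N * c - R ^ N * c) := by
    rw [hhdef]
    rw [integral_add ((integrable_indicator_iff measurableSet_ball).2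
        (integrableOn_const measure_ball_lt_top.ne))
      ((integrable_indicator_iff hAmeas).2 (integrableOn_const
        (ne_of_lt (lt_of_le_of_lt (measure_mono diff_subset) measure_closedBall_lt_top))))]
    rw [integral_indicator_const _ measurableSet_ball, integral_indicator_const _ hAmeas,
      measureReal_def, hvol_ball, measureReal_def, hvol_A]
    simp [mul_comm]
  have hinth_neg : ∫ x, h x < 0 := by
    rw [hinth]
    have expand : (F s₀ - s₀ ^ 2 / 2) * (R ^ N * c) + B * ((R+1) ^ N * c - R ^ N * c)
        = (B * ((R + 1) ^ N - R ^ N) - δ * R ^ N) * c := by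
      rw [hδdef]; ring
    rw [expand]
    have : B * ((R + 1) ^ N - R ^ N) - δ * R ^ N < 0 := by linarith
    exact mul_neg_of_neg_of_pos this hc
  have hintg : ∫ x, g x < 0 := lt_of_le_of_lt (integral_mono i_g i_h hpt) hinth_neg
  -- lower bound on charge
  have hcharge : s₀ ^ 2 * c * R ^ N ≤ ∫ x, (u x) ^ 2 := by
    have i_ind : Integrable ((ball (0:X) R).indicator (fun _ : X => s₀ ^ 2)) := by
      rw [integrable_indicator_iff measurableSet_ball]
      exact integrableOn_const measure_ball_lt_top.ne
    have hmono : ∀ x : X, (ball (0:X) R).indicator (fun _ : X => s₀ ^ 2) x ≤ (u x) ^ 2 := by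
      intro x
      by_cases hx : x ∈ ball (0:X) R
      · rw [indicator_of_mem hx]
        rw [hball x (by simpa [mem_ball, dist_zero_right] using hx)]
      · rw [indicator_of_notMem hx]
        positivity
    have := integral_mono i_ind i_u2 hmono
    rwa [integral_indicator_const _ measurableSet_ball, measureReal_def, hvol_ball, smul_eq_mul,
      show R ^ N * c * s₀ ^ 2 = s₀ ^ 2 * c * R ^ N by ring] at this
  have hint_u2_nonneg : 0 ≤ ∫ x, (u x) ^ 2 := integral_nonneg fun x => by positivity
  have habs : |(-(1:ℝ) * ∫ x, (u x) ^ 2)| = ∫ x, (u x) ^ 2 := by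
    rw [neg_one_mul, abs_neg, abs_of_nonneg hint_u2_nonneg]
  -- assemble
  refine ⟨u, 1, ?_, hnn, ⟨Real.toNNReal s₀, hlip⟩, hsupp, one_pos, ?_, ?_⟩
  · intro hu0
    have := congrFun hu0 0
    rw [hball 0 (by simpa using hR)] at this
    exact hs₀.ne' this
  · rw [habs]
    have hsplit : (∫ x, ((1:ℝ)/2 * ‖gradient u x‖ ^ 2 + (1:ℝ)/2 * (1:ℝ) ^ 2 * (u x) ^ 2
        + F (u x))) = (∫ x, (u x) ^ 2) + ∫ x, g x := by
      rw [← integral_add i_u2 i_g]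
      apply integral_congr_ae
      refine Eventually.of_forall fun x => ?_
      rw [hgdef]; dsimp only; ring
    linarith [hsplit, hintg]
  · rw [habs]; exact le_trans hMR hcharge
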